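/- (Recursion-to-rate lemma) Suppose a, c ≥ 0, b > 0, T ≥ 1, and nonnegative real sequences (s_t)_{t=0}^{T}, (q_t)_{t=0}^{T} satisfy s_{t+1} ≤ (1+a)s_t − b q_t + c for every t with 0 ≤ t ≤ T−1. Then min_{t=0,…,T−1} q_t ≤ (1+a)^T s_0/(bT) + c/b. -/
import Mathlib


open Finset

/-- **Recursion-to-rate lemma.** If s_{t+1} ≤ (1+a)s_t − b q_t + c for all
0 ≤ t ≤ T−1, with a, c ≥ 0, b > 0 and s_t, q_t ≥ 0, then
min_{t=0,…,T−1} q_t ≤ (1+a)^T s_0/(bT) + c/b. -/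
theorem recursion_to_rate
    (a b c : ℝ) (T : ℕ) (ha : 0 ≤ a) (hb : 0 < b) (hc : 0 ≤ c) (hT : 1 ≤ T)
    (s q : ℕ → ℝ) (hs : ∀ t ≤ T, 0 ≤ s t) (hq : ∀ t ≤ T, 0 ≤ q t)
    (hrec : ∀ t < T, s (t + 1) ≤ (1 + a) * s t - b * q t + c) :
    (range T).inf' (nonempty_range_iff.mpr (Nat.one_le_iff_ne_zero.mp hT)) q
      ≤ (1 + a) ^ T * s 0 / (b * T) + c / b := by
  set m := (range T).inf' (nonempty_range_iff.mpr (Nat.one_le_iff_ne_zero.mp hT)) q with hm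
  have hmle : ∀ t < T, m ≤ q t := fun t ht => inf'_le _ (mem_range.mpr ht)
  have hTpos : (0:ℝ) < T := by exact_mod_cast hT
  have hpow : (0:ℝ) ≤ (1 + a) ^ T * s 0 :=
    mul_nonneg (pow_nonneg (by linarith) T) (hs 0 (by omega))
  by_cases hcase : b * m ≤ c
  · have h1 : m ≤ c / b := (le_div_iff₀ hb).mpr (by linarith [mul_comm b m])
    have h2 : (0:ℝ) ≤ (1 + a) ^ T * s 0 / (b * T) :=
      div_nonneg hpow (by positivity)
    linarith
  · push_neg at hcase
    have hd : 0 ≤ b * m - c := by linarith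
    have key : ∀ t ≤ T, s t ≤ (1 + a) ^ t * s 0 - t * (b * m - c) := by
      intro t
      induction t with
      | zero => intro _; simp
      | succ n ih =>
        intro hn
        have hnT : n < T := by omega
        have h1 := hrec n hnT
        have h2 := hmle n hnT
        have h3 := ih (by omega)
        have hpa : (0:ℝ) ≤ (1 + a) ^ n := pow_nonneg (by linarith) n
        have hnn : (0:ℝ) ≤ (n:ℝ) := Nat.cast_nonneg n
        push_cast
        have : (1 + a) * ((n:ℝ) * (b * m - c)) ≥ (n:ℝ) * (b * m - c) := by nlinarith [mul_nonneg ha (mul_nonneg hnn hd)]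
        calc s (n + 1) ≤ (1 + a) * s n - b * q n + c := h1
          _ ≤ (1 + a) * s n - b * m + c := by nlinarith
          _ ≤ (1 + a) * ((1 + a) ^ n * s 0 - n * (b * m - c)) - (b * m - c) := by nlinarith [mul_nonneg ha (mul_nonneg hnn hd)]
          _ ≤ (1 + a) ^ (n + 1) * s 0 - ((n:ℝ) + 1) * (b * m - c) := by ring_nf; nlinarith
    have hT0 : 0 ≤ s T := hs T le_rfl
    have hkey := key T le_rfl
    have hfin : (T:ℝ) * (b * m - c) ≤ (1 + a) ^ T * s 0 := by linarith
    rw [div_add_div _ _ (by positivity : (b * (T:ℝ)) ≠ 0) hb.ne', le_div_iff₀ (by positivity)]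
    ring_nf
    nlinarith
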